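/- For η ∈ ℝ, define the 4×4 symmetric real matrix M(η) := [[(9−2η)/2, −(3−η)/2, −(6−η)/4, −(6−η)/4], [−(3−η)/2, 1/2, (2−η)/4, (2−η)/4], [−(6−η)/4, (2−η)/4, 1/2, 1/2], [−(6−η)/4, (2−η)/4, 1/2, 1/2]]. Then: (i) for every η ∈ [0,3], M(η) is positive semidefinite; (ii) for every η ∈ [0,3], the vectors u = (1/2, 1/2, 1, 0)ᵀ and v = (1/2, 1/2, 0, 1)ᵀ satisfy M(η)u = 0 and M(η)v = 0; and (iii) for every η ∈ (0,3), the kernel of M(η) is exactly the span of u and v (i.e., M(η) has rank 2). -/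

import Mathlib

open Matrix

noncomputable section

/-- The 4×4 matrix arising in the certificate proof that the pattern `(3-η, 3/2)` is
straightforward. -/
def certM (η : ℝ) : Matrix (Fin 4) (Fin 4) ℝ :=
  !![(9 - 2 * η) / 2, -(3 - η) / 2, -(6 - η) / 4, -(6 - η) / 4;
     -(3 - η) / 2, 1 / 2, (2 - η) / 4, (2 - η) / 4;
     -(6 - η) / 4, (2 - η) / 4, 1 / 2, 1 / 2;
     -(6 - η) / 4, (2 - η) / 4, 1 / 2, 1 / 2]

/-- The two kernel vectors `u` and `v`. -/
def uvec : Fin 4 → ℝ := ![1 / 2, 1 / 2, 1, 0]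
def vvec : Fin 4 → ℝ := ![1 / 2, 1 / 2, 0, 1]

lemma certM_quad (η : ℝ) (z : Fin 4 → ℝ) :
    8 * (9 - 2 * η) * (z ⬝ᵥ (certM η).mulVec z) =
      (2 * (9 - 2 * η) * z 0 - 2 * (3 - η) * z 1 - (6 - η) * (z 2 + z 3))^2
        + η * (4 - η) * (2 * z 1 - (z 2 + z 3))^2 := by
  simp only [certM, Matrix.mulVec, dotProduct, Fin.sum_univ_four,
    Matrix.cons_val_zero, Matrix.cons_val_one, Matrix.head_cons,
    Matrix.cons_val_two, Matrix.tail_cons, Matrix.cons_val_three,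
    Matrix.cons_val', Matrix.empty_val', Matrix.cons_val_fin_one, Matrix.head_fin_const,
    Matrix.of_apply]
  ring

lemma certM_kervecs (η : ℝ) :
    (certM η).mulVec uvec = 0 ∧ (certM η).mulVec vvec = 0 := by
  constructor <;> funext i <;> fin_cases i <;>
      simp only [certM, uvec, vvec, Matrix.mulVec, dotProduct, Fin.sum_univ_four,
        Matrix.cons_val_zero, Matrix.cons_val_one, Matrix.head_cons,
        Matrix.cons_val_two, Matrix.tail_cons, Matrix.cons_val_three,
        Matrix.cons_val', Matrix.empty_val', Matrix.cons_val_fin_one, Matrix.head_fin_const,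
        Matrix.of_apply, Fin.mk_zero, Fin.mk_one, Pi.zero_apply] <;>
    norm_num <;> ring

lemma certM_herm (η : ℝ) : (certM η).IsHermitian := by
  ext i j
  fin_cases i <;> fin_cases j <;> rfl

/-- (i) `M(η) ⪰ 0` for `η ∈ [0,3]`; (ii) `u` and `v` are in its kernel for `η ∈ [0,3]`;
(iii) for `η ∈ (0,3)` the kernel of `M(η)` is exactly the span of `u` and `v`. -/
theorem certM_psd_and_kernel :
    (∀ η : ℝ, 0 ≤ η → η ≤ 3 → (certM η).PosSemidef)
    ∧ (∀ η : ℝ, 0 ≤ η → η ≤ 3 →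
        (certM η).mulVec uvec = 0 ∧ (certM η).mulVec vvec = 0)
    ∧ (∀ η : ℝ, 0 < η → η < 3 →
        ∀ z : Fin 4 → ℝ, (certM η).mulVec z = 0 ↔ ∃ α β : ℝ, z = α • uvec + β • vvec) := by
  refine ⟨?_, fun η _ _ => certM_kervecs η, ?_⟩
  · intro η h0 h3
    refine Matrix.PosSemidef.of_dotProduct_mulVec_nonneg (certM_herm η) ?_
    intro x
    have key := certM_quad η x
    have hsq1 := sq_nonneg (2 * (9 - 2 * η) * x 0 - 2 * (3 - η) * x 1 - (6 - η) * (x 2 + x 3))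
    have hsq2 : 0 ≤ η * (4 - η) * (2 * x 1 - (x 2 + x 3))^2 :=
      mul_nonneg (mul_nonneg h0 (by linarith)) (sq_nonneg _)
    simp only [star_trivial]
    nlinarith [key]
  · intro η h0 h3 z
    constructor
    · intro hz
      have hq : z ⬝ᵥ (certM η).mulVec z = 0 := by rw [hz]; simp
      have key := certM_quad η z
      rw [hq] at key
      have hsq1 := sq_nonneg (2 * (9 - 2 * η) * z 0 - 2 * (3 - η) * z 1 - (6 - η) * (z 2 + z 3))
      have hsq2 := sq_nonneg (2 * z 1 - (z 2 + z 3))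
      have hab : (0:ℝ) < η * (4 - η) := by nlinarith
      have hs2 : (2 * z 1 - (z 2 + z 3))^2 = 0 := by nlinarith
      have h1 : 2 * z 1 - (z 2 + z 3) = 0 := by
        exact (pow_eq_zero_iff two_ne_zero).mp hs2
      have hA : 2 * (9 - 2 * η) * z 0 - 2 * (3 - η) * z 1 - (6 - η) * (z 2 + z 3) = 0 := by
        have hA2 : (2 * (9 - 2 * η) * z 0 - 2 * (3 - η) * z 1 - (6 - η) * (z 2 + z 3))^2 = 0 := by
          nlinarith
        exact (pow_eq_zero_iff two_ne_zero).mp hA2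
      have h0' : 2 * z 0 - (z 2 + z 3) = 0 := by
        have h9 : (9 - 2 * η) * (2 * z 0 - (z 2 + z 3)) = 0 := by nlinarith
        rcases mul_eq_zero.mp h9 with h | h
        · linarith
        · exact h
      refine ⟨z 2, z 3, ?_⟩
      funext i
      fin_cases i <;>
        simp [uvec, vvec] <;> linarith
    · rintro ⟨α, β, rfl⟩
      obtain ⟨hu, hv⟩ := certM_kervecs η
      rw [Matrix.mulVec_add, Matrix.mulVec_smul, Matrix.mulVec_smul, hu, hv]
      simp
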